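/- Let M be an n×l binary matrix. The columns of M, viewed as subsets of {1,...,n}, form a chain under inclusion if and only if there exist a partition λ contained in the n×l rectangle and permutations w of {1,...,n} and ẇ of {1,...,l} such that M is obtained from the matrix M_λ by permuting rows by w and columns by ẇ, where M_λ is the binary matrix with (M_λ)_{i,j} = 1 exactly when j ≤ λ_i. -/

import Mathlib

open Finset

/-- A downward-closed subset of `Fin l` is an initial segment. -/
lemma lowerset_mem_iff_lt_card {l : ℕ} (S : Finset (Fin l))
    (hS : ∀ k k' : Fin l, k ≤ k' → k' ∈ S → k ∈ S) (k : Fin l) :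
    k ∈ S ↔ (k : ℕ) < S.card := by
  constructor
  · intro hk
    have h1 : Finset.Iic k ⊆ S := fun x hx => hS x k (Finset.mem_Iic.mp hx) hk
    have h2 := Finset.card_le_card h1
    rw [Fin.card_Iic] at h2
    omega
  · intro hk
    by_contra hkS
    have h1 : S ⊆ Finset.Iio k := by
      intro x hx
      rw [Finset.mem_Iio]
      by_contra hxk
      exact hkS (hS k x (le_of_not_gt hxk) hx)
    have h2 := Finset.card_le_card h1
    rw [Fin.card_Iio] at h2
    omega

/-- **Chain-column binary matrices are row/column permutations of Young diagrams.**
The columns of an `n × l` binary matrix `M` form a chain under inclusion if and only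
if there exist a partition `λ` contained in the `n × l` rectangle (weakly decreasing,
with parts at most `l`) and permutations `w` of the rows and `ẇ` of the columns such
that `M (i,j) = (M_λ) (w i, ẇ j)`, where `M_λ` has a `1` in (0-indexed) position
`(i,j)` exactly when `j < λ_i`. -/
theorem columns_chain_iff_permuted_partition {n l : ℕ} (M : Fin n × Fin l → Bool) :
    (∀ j j' : Fin l,
        {i : Fin n | M (i, j)} ⊆ {i : Fin n | M (i, j')} ∨
        {i : Fin n | M (i, j')} ⊆ {i : Fin n | M (i, j)}) ↔
    ∃ (lam : Fin n → ℕ), (∀ i i' : Fin n, i ≤ i' → lam i' ≤ lam i) ∧ (∀ i, lam i ≤ l) ∧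
      ∃ (w : Equiv.Perm (Fin n)) (w' : Equiv.Perm (Fin l)),
        ∀ (i : Fin n) (j : Fin l), M (i, j) = decide ((w' j : ℕ) < lam (w i)) := by
  constructor
  · intro h
    set μ : Fin n → ℕ := fun i => (univ.filter fun j => M (i, j)).card with hμ
    set c : Fin l → ℕ := fun j => (univ.filter fun i => M (i, j)).card with hc
    have key : ∀ j j' : Fin l, c j ≤ c j' → ∀ i : Fin n, M (i, j) = true → M (i, j') = true := by
      intro j j' hle i hi
      rcases h j j' with hs | hs
      · exact hs hi
      · have hsub : (univ.filter fun i => M (i, j')) ⊆ (univ.filter fun i => M (i, j)) := by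
          intro x hx
          simp only [mem_filter, mem_univ, true_and] at hx ⊢
          exact hs hx
        have heq := Finset.eq_of_subset_of_card_le hsub hle
        have hmem : i ∈ (univ.filter fun i => M (i, j')) := by
          rw [heq]; simp [hi]
        simpa using hmem
    set σ := Tuple.sort μ with hσdef
    set τ0 := Tuple.sort c with hτdef
    have hσ : Monotone (μ ∘ σ) := Tuple.monotone_sort μ
    have hτ : Monotone (c ∘ τ0) := Tuple.monotone_sort c
    refine ⟨fun i => μ (σ (Fin.rev i)), ?_, ?_, (Fin.revPerm.trans σ)⁻¹,
      (Fin.revPerm.trans τ0)⁻¹, ?_⟩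
    · intro i i' hii
      exact hσ (Fin.rev_le_rev.mpr hii)
    · intro i
      calc μ (σ (Fin.rev i)) ≤ (univ : Finset (Fin l)).card := Finset.card_filter_le _ _
        _ = l := by simp
    · intro i j
      have hrow : σ (Fin.rev ((Fin.revPerm.trans σ)⁻¹ i)) = i :=
        (Fin.revPerm.trans σ).apply_symm_apply i
      have hcol : τ0 (Fin.rev ((Fin.revPerm.trans τ0)⁻¹ j)) = j :=
        (Fin.revPerm.trans τ0).apply_symm_apply j
      set k := (Fin.revPerm.trans τ0)⁻¹ j with hk
      -- the set of column-indices (in sorted order) where row i has a 1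
      set S : Finset (Fin l) := univ.filter fun k => M (i, τ0 (Fin.rev k)) with hS
      have hlower : ∀ a b : Fin l, a ≤ b → b ∈ S → a ∈ S := by
        intro a b hab hb
        simp only [hS, mem_filter, mem_univ, true_and] at hb ⊢
        have : c (τ0 (Fin.rev b)) ≤ c (τ0 (Fin.rev a)) := hτ (Fin.rev_le_rev.mpr hab)
        exact key _ _ this i hb
      have hcard : S.card = μ i := by
        rw [hS, hμ]
        apply Finset.card_bij' (fun a _ => τ0 (Fin.rev a))
          (fun b _ => (Fin.revPerm.trans τ0)⁻¹ b)
        · intro a ha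
          simp only [mem_filter, mem_univ, true_and] at ha ⊢
          exact ha
        · intro b hb
          simp only [mem_filter, mem_univ, true_and] at hb ⊢
          rw [show τ0 (Fin.rev ((Fin.revPerm.trans τ0)⁻¹ b)) = b from
            (Fin.revPerm.trans τ0).apply_symm_apply b]
          exact hb
        · intro a _
          exact (Fin.revPerm.trans τ0).symm_apply_apply a
        · intro b _
          exact (Fin.revPerm.trans τ0).apply_symm_apply b
      have hmem := lowerset_mem_iff_lt_card S hlower k
      rw [hcard] at hmem
      simp only [hS, mem_filter, mem_univ, true_and, hcol] at hmem
      rw [show (fun i => μ (σ (Fin.rev i))) ((Fin.revPerm.trans σ)⁻¹ i) = μ i from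
        congrArg μ hrow]
      rcases Nat.lt_or_ge (k : ℕ) (μ i) with hlt | hge
      · rw [hmem.mpr hlt]
        simp [hlt]
      · have : M (i, j) ≠ true := fun hx => absurd (hmem.mp hx) (by omega)
        rw [Bool.eq_false_iff.mpr this]
        simp; omega
  · rintro ⟨lam, hdec, _, w, w', hM⟩
    intro j j'
    rcases le_total (w' j : ℕ) (w' j' : ℕ) with hle | hle
    · right
      intro i hi
      simp only [Set.mem_setOf_eq, hM] at hi ⊢
      rw [decide_eq_true_eq] at hi ⊢
      omega
    · left
      intro i hi
      simp only [Set.mem_setOf_eq, hM] at hi ⊢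
      rw [decide_eq_true_eq] at hi ⊢
      omega
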